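/- Let f : ℝⁿ → ℝ be twice continuously differentiable and λ > 0. Let (ε_g^k) and (ε_h^k) be sequences of positive reals decreasing to 0 and let (w^k) be a sequence in ℝⁿ converging to w* such that for every k: (i) ‖g^{ε_g^k}(w^k)‖ ≤ ε_g^k, and (ii) ⟨S_{w^k,ε_g^k} u, ∇²f(w^k)·S_{w^k,ε_g^k} u⟩ ≥ −ε_h^k‖u‖² for every u ∈ ℝⁿ with u_i = 0 whenever w^k_i = 0. Then g(w*) = 0 and ⟨z, ∇²f(w*) z⟩ ≥ 0 for every z ∈ ℝⁿ with z_i = 0 whenever w*_i = 0. -/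

import Mathlib

open scoped RealInnerProductSpace

noncomputable section

/-- `ℝⁿ` with the Euclidean norm. -/
abbrev E (n : ℕ) := EuclideanSpace ℝ (Fin n)

/-- The vector `g(x)` measuring first-order stationarity of `f + lam‖·‖₁`. -/
def gvec (n : ℕ) (f : E n → ℝ) (lam : ℝ) (x : E n) : E n := WithLp.toLp 2 fun i =>
  if 0 < x i then gradient f x i + lam
  else if x i < 0 then gradient f x i - lam
  else gradient f x i - min (max (-lam) (gradient f x i)) lam

/-- The proximal-gradient residual `G_t(x) = t (x - prox_{(lam/t)‖·‖₁}(x - ∇f(x)/t))`. -/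
def Gres (n : ℕ) (f : E n → ℝ) (lam t : ℝ) (x : E n) : E n := WithLp.toLp 2 fun i =>
  if (gradient f x i + lam) / t < x i then gradient f x i + lam
  else if x i < (gradient f x i - lam) / t then gradient f x i - lam
  else t * x i

/-- The proximal-gradient update `P_t(x) = prox_{(lam/t)‖·‖₁}(x - ∇f(x)/t)` (soft-thresholding). -/
def Pt (n : ℕ) (f : E n → ℝ) (lam t : ℝ) (x : E n) : E n := WithLp.toLp 2 fun i =>
  if lam / t < x i - gradient f x i / t then x i - gradient f x i / t - lam / t
  else if x i - gradient f x i / t < -(lam / t) then x i - gradient f x i / t + lam / t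
  else 0

/-- The objective `φ(x) = f(x) + lam ‖x‖₁`. -/
def phi (n : ℕ) (f : E n → ℝ) (lam : ℝ) (x : E n) : ℝ := f x + lam * ∑ i, |x i|

/-- The Hessian of `f` at `x`, as a continuous linear map. -/
def hess (n : ℕ) (f : E n → ℝ) (x : E n) : E n →L[ℝ] E n := fderiv ℝ (gradient f) x

/-- The scaling map `S_{x,ε}`: identity on coordinates with `|x_i| > √ε`, multiplication by
`x_i` on the others. -/
def Smap (n : ℕ) (x : E n) (eps : ℝ) (u : E n) : E n := WithLp.toLp 2 fun i =>
  if Real.sqrt eps < |x i| then u i else x i * u i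

/-- The relaxed first-order residual vector `g^ε(x)`. -/
def gveps (n : ℕ) (f : E n → ℝ) (lam eps : ℝ) (x : E n) : E n := WithLp.toLp 2 fun i =>
  if Real.sqrt eps < x i then gradient f x i + lam
  else if x i < -Real.sqrt eps then gradient f x i - lam
  else gradient f x i -
    min (max (-(lam + eps ^ ((3:ℝ)/4))) (gradient f x i)) (lam + eps ^ ((3:ℝ)/4))

lemma abs_coord_le {n : ℕ} (v : E n) (i : Fin n) : |v i| ≤ ‖v‖ := by
  rw [EuclideanSpace.norm_eq, ← Real.sqrt_sq_eq_abs]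
  apply Real.sqrt_le_sqrt
  exact Finset.single_le_sum (f := fun j => ‖v j‖^2) (fun j _ => by positivity)
    (Finset.mem_univ i) |>.trans_eq (by simp) |>.trans_eq' (by simp [sq_abs])

/-- Limits of weak approximate second-order stationary points satisfy the
exact (weak) second-order necessary optimality conditions. -/
theorem stmt1 {n : ℕ} (hn : 1 ≤ n) (f : E n → ℝ) (hf : ContDiff ℝ 2 f)
    (lam : ℝ) (hlam : 0 < lam)
    (εg εh : ℕ → ℝ) (hεgpos : ∀ k, 0 < εg k) (hεhpos : ∀ k, 0 < εh k)
    (hεgmono : Antitone εg) (hεhmono : Antitone εh)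
    (hεg0 : Filter.Tendsto εg Filter.atTop (nhds 0))
    (hεh0 : Filter.Tendsto εh Filter.atTop (nhds 0))
    (w : ℕ → E n) (wstar : E n) (hw : Filter.Tendsto w Filter.atTop (nhds wstar))
    (h1 : ∀ k, ‖gveps n f lam (εg k) (w k)‖ ≤ εg k)
    (h2 : ∀ k, ∀ u : E n, (∀ i, w k i = 0 → u i = 0) →
      -(εh k) * ‖u‖ ^ 2 ≤
        ⟪Smap n (w k) (εg k) u, hess n f (w k) (Smap n (w k) (εg k) u)⟫) :
    gvec n f lam wstar = 0 ∧
      ∀ z : E n, (∀ i, wstar i = 0 → z i = 0) → 0 ≤ ⟪z, hess n f wstar z⟫ := by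
  -- Continuity of the gradient and of the Hessian
  have hgradCD : ContDiff ℝ 1 (gradient f) := by
    have hfd : ContDiff ℝ 1 (fderiv ℝ f) := hf.fderiv_right (by norm_num)
    exact ((InnerProductSpace.toDual ℝ (E n)).symm.contDiff).comp hfd
  have hgradC : Continuous (gradient f) := hgradCD.continuous
  have hhessC : Continuous (fun x => hess n f x) := hgradCD.continuous_fderiv one_ne_zero
  -- coordinate limits
  have hcoord : ∀ i : Fin n, Filter.Tendsto (fun k => w k i) Filter.atTop (nhds (wstar i)) :=
    fun i => ((EuclideanSpace.proj i : E n →L[ℝ] ℝ).continuous.tendsto wstar).comp hw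
  have hgradtend : ∀ i : Fin n, Filter.Tendsto (fun k => gradient f (w k) i)
      Filter.atTop (nhds (gradient f wstar i)) := fun i =>
    ((EuclideanSpace.proj i : E n →L[ℝ] ℝ).continuous.tendsto _).comp
      ((hgradC.tendsto wstar).comp hw)
  have hsqrt : Filter.Tendsto (fun k => Real.sqrt (εg k)) Filter.atTop (nhds 0) := by
    have := (Real.continuous_sqrt.tendsto 0).comp hεg0
    simpa [Function.comp_def] using this
  have h34 : Filter.Tendsto (fun k => εg k ^ ((3:ℝ)/4)) Filter.atTop (nhds 0) := by
    have := ((Real.continuousAt_rpow_const 0 ((3:ℝ)/4) (Or.inr (by norm_num))).tendsto).comp hεg0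
    simpa [Function.comp_def, Real.zero_rpow (by norm_num : ((3:ℝ)/4) ≠ 0)] using this
  have habs : ∀ k i, |gveps n f lam (εg k) (w k) i| ≤ εg k := fun k i =>
    (abs_coord_le _ i).trans (h1 k)
  constructor
  · ext i
    show gvec n f lam wstar i = 0
    rcases lt_trichotomy (wstar i) 0 with hi | hi | hi
    · -- wstar i < 0
      have hev : ∀ᶠ k in Filter.atTop, w k i < -Real.sqrt (εg k) :=
        (hcoord i).eventually_lt (hsqrt.neg.congr (by simp)) (by simpa using hi)
      have hten : Filter.Tendsto (fun k => gradient f (w k) i - lam) Filter.atTop (nhds 0) := by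
        apply squeeze_zero_norm' _ hεg0
        filter_upwards [hev] with k hk
        have hne : ¬ Real.sqrt (εg k) < w k i := by
          have := Real.sqrt_nonneg (εg k)
          nlinarith
        have := habs k i
        simpa [gveps, hne, hk] using this
      have := tendsto_nhds_unique (((hgradtend i).sub_const lam)) hten
      simp [gvec, hi, not_lt.mpr hi.le]
      linarith
    · -- wstar i = 0
      have hb : ∀ k, |gradient f (w k) i| ≤ lam + εg k ^ ((3:ℝ)/4) + εg k := by
        intro k
        have he := (hεgpos k).le
        have hrs : (0:ℝ) ≤ εg k ^ ((3:ℝ)/4) := Real.rpow_nonneg he _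
        have hg := habs k i
        by_cases h1' : Real.sqrt (εg k) < w k i
        · have : |gradient f (w k) i + lam| ≤ εg k := by simpa [gveps, h1'] using hg
          rw [abs_le] at this ⊢
          constructor <;> nlinarith
        · by_cases h2' : w k i < -Real.sqrt (εg k)
          · have : |gradient f (w k) i - lam| ≤ εg k := by simpa [gveps, h1', h2'] using hg
            rw [abs_le] at this ⊢
            constructor <;> nlinarith
          · set L := lam + εg k ^ ((3:ℝ)/4) with hL
            have hL0 : 0 ≤ L := by positivity
            have hc : |min (max (-L) (gradient f (w k) i)) L| ≤ L := by
              rw [abs_le]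
              refine ⟨le_min (le_max_left _ _) (by linarith), min_le_right _ _⟩
            have hgd : |gradient f (w k) i - min (max (-L) (gradient f (w k) i)) L| ≤ εg k := by
              simpa [gveps, h1', h2', hL] using hg
            calc |gradient f (w k) i|
                ≤ |gradient f (w k) i - min (max (-L) (gradient f (w k) i)) L|
                  + |min (max (-L) (gradient f (w k) i)) L| := by
                  have := abs_sub_abs_le_abs_sub (gradient f (w k) i)
                    (min (max (-L) (gradient f (w k) i)) L)
                  linarith
              _ ≤ εg k + L := add_le_add hgd hc
              _ = lam + εg k ^ ((3:ℝ)/4) + εg k := by rw [hL]; ring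
      have hlim : |gradient f wstar i| ≤ lam := by
        have hleft : Filter.Tendsto (fun k => |gradient f (w k) i|) Filter.atTop
            (nhds (|gradient f wstar i|)) := (hgradtend i).abs
        have hright : Filter.Tendsto (fun k => lam + εg k ^ ((3:ℝ)/4) + εg k) Filter.atTop
            (nhds lam) := by
          have := ((tendsto_const_nhds (x := lam)).add h34).add hεg0
          simpa using this
        exact le_of_tendsto_of_tendsto hleft hright (Filter.Eventually.of_forall hb)
      rw [abs_le] at hlim
      have : min (max (-lam) (gradient f wstar i)) lam = gradient f wstar i := by
        rw [max_eq_right hlim.1, min_eq_left hlim.2]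
      simp [gvec, hi, this]
    · -- 0 < wstar i
      have hev : ∀ᶠ k in Filter.atTop, Real.sqrt (εg k) < w k i :=
        hsqrt.eventually_lt (hcoord i) hi
      have hten : Filter.Tendsto (fun k => gradient f (w k) i + lam) Filter.atTop (nhds 0) := by
        apply squeeze_zero_norm' _ hεg0
        filter_upwards [hev] with k hk
        have := habs k i
        simpa [gveps, hk] using this
      have := tendsto_nhds_unique (((hgradtend i).add_const lam)) hten
      simp [gvec, hi]
      linarith
  · intro z hz
    have hev : ∀ᶠ k in Filter.atTop, ∀ i : Fin n, wstar i ≠ 0 →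
        Real.sqrt (εg k) < |w k i| := by
      rw [Filter.eventually_all]
      intro i
      by_cases hwi : wstar i = 0
      · exact Filter.Eventually.of_forall fun k h => absurd hwi h
      · have h0 : 0 < |wstar i| := abs_pos.mpr hwi
        filter_upwards [hsqrt.eventually_lt (hcoord i).abs h0] with k hk _
        exact hk
    have key : ∀ᶠ k in Filter.atTop,
        -(εh k) * ‖z‖ ^ 2 ≤ ⟪z, hess n f (w k) z⟫ := by
      filter_upwards [hev] with k hk
      have hz' : ∀ i, w k i = 0 → z i = 0 := by
        intro i h0
        by_cases hwi : wstar i = 0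
        · exact hz i hwi
        · exact absurd (hk i hwi) (by simp [h0, Real.sqrt_nonneg])
      have hS : Smap n (w k) (εg k) z = z := by
        ext i
        simp only [Smap]
        by_cases hlt : Real.sqrt (εg k) < |w k i|
        · simp [hlt]
        · have hwi : wstar i = 0 := by
            by_contra hne
            exact hlt (hk i hne)
          simp [hlt, hz i hwi]
      have := h2 k z hz'
      rwa [hS] at this
    have hL : Filter.Tendsto (fun k => -(εh k) * ‖z‖ ^ 2) Filter.atTop (nhds 0) := by
      have := (hεh0.neg).mul_const (‖z‖ ^ 2)
      simpa using this
    have hR : Filter.Tendsto (fun k => ⟪z, hess n f (w k) z⟫) Filter.atTop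
        (nhds (⟪z, hess n f wstar z⟫)) := by
      have hAp : Filter.Tendsto (fun k => hess n f (w k) z) Filter.atTop
          (nhds (hess n f wstar z)) :=
        (((ContinuousLinearMap.apply ℝ (E n) z).continuous.tendsto _).comp
          ((hhessC.tendsto wstar).comp hw))
      exact Filter.Tendsto.inner tendsto_const_nhds hAp
    exact le_of_tendsto_of_tendsto hL hR key
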